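/- arXiv:2503.13186 — 2 statements merged into one kernel-verified Lean document; each statement's English description precedes it below -/
import Mathlib

section
/- Fix N ≥ 1 and real numbers a, b with a ≠ b. Let J ∈ ℝ^{(N+1)×(N+1)} be the matrix whose entries are J_{i,i} = a and J_{i,i+1} = b for 1 ≤ i ≤ N, J_{N+1,j} = C(N, j−1) (binomial coefficient) for 1 ≤ j ≤ N+1, and all other entries zero. Then det J = (a − b)^N. In particular J is invertible. -/
open Matrix Finset

private def Mgen (n : ℕ) (a b : ℝ) (w : Fin (n+1) → ℝ) : Matrix (Fin (n+1)) (Fin (n+1)) ℝ :=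
  fun i j => if (i : ℕ) < n then
      (if j = i then a else if (j : ℕ) = (i : ℕ) + 1 then b else 0)
    else w j

private lemma key (n : ℕ) (a b : ℝ) (w : Fin (n+1) → ℝ) :
    (Mgen n a b w).det =
      ∑ j : Fin (n+1), (-1) ^ (n + (j : ℕ)) * a ^ (j : ℕ) * b ^ (n - (j : ℕ)) * w j := by
  induction n with
  | zero =>
      simp [Mgen, Matrix.det_fin_one]
  | succ n ih =>
      have hdet := Matrix.det_succ_column_zero (Mgen (n+1) a b w)
      rw [hdet, Fin.sum_univ_succ]
      -- the tail sum has only the `i = Fin.last n` term nonzero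
      have hzero : ∀ i : Fin (n+1), i ≠ Fin.last n →
          (-1:ℝ) ^ ((i.succ : Fin (n+2)) : ℕ) * Mgen (n+1) a b w i.succ 0 *
            det ((Mgen (n+1) a b w).submatrix (Fin.succAbove i.succ) Fin.succ) = 0 := by
        intro i hi
        have hi' : (i : ℕ) < n := by
          have := i.isLt
          have : (i : ℕ) ≠ n := fun h => hi (Fin.ext h)
          omega
        have : Mgen (n+1) a b w i.succ 0 = 0 := by
          simp only [Mgen, Fin.val_succ]
          rw [if_pos (by omega)]
          rw [if_neg, if_neg]
          · simp
          · intro h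
            exact absurd (Fin.ext_iff.mp h) (by simp [Fin.val_succ])
        rw [this]; ring
      rw [Finset.sum_eq_single (Fin.last n)
        (fun i _ hi => hzero i hi) (fun h => absurd (Finset.mem_univ _) h)]
      -- identify the two remaining pieces
      have h00 : Mgen (n+1) a b w 0 0 = a := by simp [Mgen]
      have hlast0 : Mgen (n+1) a b w (Fin.last n).succ 0 = w 0 := by
        simp [Mgen, Fin.val_succ]
      have hsub0 : (Mgen (n+1) a b w).submatrix (Fin.succAbove 0) Fin.succ
          = Mgen n a b (fun j => w j.succ) := by
        ext i j
        simp only [Matrix.submatrix_apply, Fin.succAbove_zero, Mgen, Fin.val_succ]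
        by_cases hi : (i : ℕ) < n
        · rw [if_pos (by omega), if_pos hi]
          have h1 : (j.succ = i.succ) ↔ (j = i) := by
            constructor
            · intro h; exact Fin.succ_injective _ h
            · intro h; rw [h]
          have h2 : ((j:ℕ)+1 = (i:ℕ)+1+1) ↔ ((j:ℕ) = (i:ℕ)+1) := by omega
          simp only [h1]
          by_cases hji : j = i
          · simp [hji]
          · rw [if_neg hji, if_neg hji]
            by_cases hj2 : (j:ℕ) = (i:ℕ)+1
            · rw [if_pos (by omega), if_pos hj2]
            · rw [if_neg (by omega), if_neg hj2]
        · rw [if_neg (by omega), if_neg hi]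
      have hsublast : det ((Mgen (n+1) a b w).submatrix
          (Fin.succAbove (Fin.last n).succ) Fin.succ) = b ^ (n+1) := by
        have hsa : (Fin.last n).succ = Fin.last (n+1) := rfl
        have hB : ∀ i j : Fin (n+1),
            (Mgen (n+1) a b w).submatrix (Fin.succAbove (Fin.last n).succ) Fin.succ i j
            = (if (j:ℕ)+1 = (i:ℕ) then a else if (j:ℕ) = (i:ℕ) then b else 0) := by
          intro i j
          simp only [Matrix.submatrix_apply, hsa, Fin.succAbove_last, Mgen,
            Fin.coe_castSucc, Fin.val_succ]
          rw [if_pos (by omega : (i:ℕ) < n+1)]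
          have hfst : (j.succ = Fin.castSucc i) ↔ ((j:ℕ)+1 = (i:ℕ)) := by
            rw [Fin.ext_iff]; simp [Fin.val_succ, Fin.coe_castSucc]
          by_cases h1 : (j:ℕ)+1 = (i:ℕ)
          · rw [if_pos (hfst.mpr h1), if_pos h1]
          · rw [if_neg (fun h => h1 (hfst.mp h)), if_neg h1]
            by_cases h2 : (j:ℕ) = (i:ℕ)
            · rw [if_pos (by omega), if_pos h2]
            · rw [if_neg (by omega), if_neg h2]
        have ht : ((Mgen (n+1) a b w).submatrix
            (Fin.succAbove (Fin.last n).succ) Fin.succ).BlockTriangular OrderDual.toDual := by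
          intro i j hij
          rw [hB]
          have : (i:ℕ) < (j:ℕ) := hij
          rw [if_neg (by omega), if_neg (by omega)]
        rw [Matrix.det_of_lowerTriangular _ ht]
        have hd : ∀ i : Fin (n+1), (Mgen (n+1) a b w).submatrix
            (Fin.succAbove (Fin.last n).succ) Fin.succ i i = b := by
          intro i; rw [hB, if_neg (by omega), if_pos rfl]
        rw [Finset.prod_congr rfl (fun i _ => hd i), Finset.prod_const]
        simp
      rw [h00, hlast0, hsub0, hsublast, ih]
      conv_rhs => rw [Fin.sum_univ_succ]
      simp only [Fin.val_succ, Fin.val_zero, Fin.val_last, pow_zero, Nat.add_zero,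
        Nat.sub_zero, mul_one, one_mul]
      have hterm : ∀ j : Fin (n+1),
          (-1:ℝ) ^ (n + 1 + ((j:ℕ) + 1)) * a ^ ((j:ℕ)+1) * b ^ (n + 1 - ((j:ℕ)+1)) * w j.succ
          = a * ((-1) ^ (n + (j:ℕ)) * a ^ (j:ℕ) * b ^ (n - (j:ℕ)) * w j.succ) := by
        intro j
        have h2 : n + 1 + ((j:ℕ) + 1) = (n + (j:ℕ)) + 2 := by omega
        have h3 : n + 1 - ((j:ℕ) + 1) = n - (j:ℕ) := by omega
        rw [h2, h3]
        ring
      rw [Finset.sum_congr rfl (fun j _ => hterm j), ← Finset.mul_sum]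
      ring

/-- Determinant of the matrix `J^{(N)}_{αβ}` (β ≠ α): diagonal `a`, superdiagonal `b`,
last row of binomial coefficients. -/
theorem stmt_4 (N : ℕ) (hN : 1 ≤ N) (a b : ℝ) (hab : a ≠ b)
    (J : Matrix (Fin (N+1)) (Fin (N+1)) ℝ)
    (hJ : ∀ i j : Fin (N+1), J i j =
      if (i : ℕ) < N then
        (if j = i then a else if (j : ℕ) = (i : ℕ) + 1 then b else 0)
      else (N.choose (j : ℕ) : ℝ)) :
    J.det = (a - b) ^ N ∧ IsUnit J := by
  have hJM : J = Mgen N a b (fun j => (N.choose (j : ℕ) : ℝ)) := by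
    ext i j; rw [hJ]; rfl
  have hdet : J.det = (a - b) ^ N := by
    rw [hJM, key, sub_pow]
    rw [Finset.sum_range fun m => ((-1:ℝ)) ^ (m + N) * a ^ m * b ^ (N - m) * (N.choose m : ℝ)]
    apply Finset.sum_congr rfl
    intro j _
    rw [add_comm N (j:ℕ)]
  refine ⟨hdet, ?_⟩
  rw [Matrix.isUnit_iff_isUnit_det, hdet, isUnit_iff_ne_zero]
  exact pow_ne_zero _ (sub_ne_zero_of_ne hab)
end

section
/- With J as in the previous context (diagonal a, superdiagonal b ≠ 0, a ≠ b, last row of binomial coefficients C(N,·)), the rows of J^{-1} satisfy the recurrence (J^{-1})_l = (1/b) e_{l−1}^T − (a/b)(J^{-1})_{l−1} for 2 ≤ l ≤ N+1, where (J^{-1})_l denotes the l-th row of J^{-1} and e_{l−1} the (l−1)-th standard basis vector of ℝ^{N+1}. -/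
open Matrix

/-- Row recurrence for the inverse of `J^{(N)}_{αβ}`:
`(J⁻¹)_l = (1/b) e_{l−1}ᵀ − (a/b)(J⁻¹)_{l−1}` for `2 ≤ l ≤ N+1` (1-based). -/
theorem stmt_7 (N : ℕ) (hN : 1 ≤ N) (a b : ℝ) (hb : b ≠ 0) (hab : a ≠ b)
    (J : Matrix (Fin (N+1)) (Fin (N+1)) ℝ)
    (hJ : ∀ i j : Fin (N+1), J i j =
      if (i : ℕ) < N then
        (if j = i then a else if (j : ℕ) = (i : ℕ) + 1 then b else 0)
      else (N.choose (j : ℕ) : ℝ)) :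
    ∀ (l : ℕ) (hl : l < N), ∀ j : Fin (N+1),
      J⁻¹ ⟨l + 1, by omega⟩ j =
        (1 / b) * (if (j : ℕ) = l then 1 else 0) - (a / b) * J⁻¹ ⟨l, by omega⟩ j := by
  -- Key row computation: for i < N, row i of J dotted with any vector X.
  have key : ∀ (i : ℕ) (hi : i < N) (X : Fin (N+1) → ℝ),
      ∑ k, J ⟨i, by omega⟩ k * X k = a * X ⟨i, by omega⟩ + b * X ⟨i+1, by omega⟩ := by
    intro i hi X
    have hterm : ∀ k : Fin (N+1), J ⟨i, by omega⟩ k * X k =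
        (if k = ⟨i, by omega⟩ then a * X k else 0)
          + (if k = ⟨i+1, by omega⟩ then b * X k else 0) := by
      intro k
      rw [hJ]
      simp only [hi, if_pos]
      by_cases h1 : k = (⟨i, by omega⟩ : Fin (N+1))
      · have h2 : ¬ (k : ℕ) = i + 1 := by subst h1; simp
        have h3 : k ≠ (⟨i+1, by omega⟩ : Fin (N+1)) := by
          subst h1; simp [Fin.ext_iff]
        simp [h1, h2, h3]
      · by_cases h2 : (k : ℕ) = i + 1
        · have h3 : k = (⟨i+1, by omega⟩ : Fin (N+1)) := by
            exact Fin.ext h2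
          simp [h1, h2, h3]
        · have h3 : k ≠ (⟨i+1, by omega⟩ : Fin (N+1)) := by
            simp [Fin.ext_iff, h2]
          simp [h1, h2, h3]
    rw [Finset.sum_congr rfl (fun k _ => hterm k), Finset.sum_add_distrib,
      Finset.sum_ite_eq' Finset.univ, Finset.sum_ite_eq' Finset.univ]
    simp
  -- J is invertible: its kernel is trivial.
  have hker : ∀ v : Fin (N+1) → ℝ, J.mulVec v = 0 → v = 0 := by
    intro v hv
    have hrec : ∀ (i : ℕ) (hi : i < N),
        v ⟨i+1, by omega⟩ = (-(a/b)) * v ⟨i, by omega⟩ := by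
      intro i hi
      have h := congrFun hv ⟨i, by omega⟩
      simp only [Matrix.mulVec, dotProduct, Pi.zero_apply] at h
      rw [key i hi v] at h
      field_simp
      linarith
    have hgeo : ∀ (i : ℕ) (hi : i ≤ N), v ⟨i, by omega⟩ = (-(a/b))^i * v ⟨0, by omega⟩ := by
      intro i
      induction i with
      | zero => intro _; simp
      | succ n ih =>
        intro hi
        rw [hrec n (by omega), ih (by omega), pow_succ]
        ring
    have hv0 : v ⟨0, by omega⟩ = 0 := by
      have h := congrFun hv ⟨N, by omega⟩
      simp only [Matrix.mulVec, dotProduct, Pi.zero_apply] at h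
      have hrow : ∀ k : Fin (N+1), J ⟨N, by omega⟩ k * v k
          = (N.choose (k : ℕ) : ℝ) * ((-(a/b))^(k : ℕ) * v ⟨0, by omega⟩) := by
        intro k
        rw [hJ]
        simp only [lt_irrefl, if_neg (by simp : ¬ ((⟨N, by omega⟩ : Fin (N+1)) : ℕ) < N)]
        have hk' := hgeo (k : ℕ) (by omega)
        rw [Fin.eta] at hk'
        rw [hk']
        simp
      rw [Finset.sum_congr rfl (fun k _ => hrow k)] at h
      have hsum : ∑ k : Fin (N+1), (N.choose (k : ℕ) : ℝ) * ((-(a/b))^(k : ℕ) * v ⟨0, by omega⟩)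
          = ((-(a/b)) + 1)^N * v ⟨0, by omega⟩ := by
        rw [Fin.sum_univ_eq_sum_range (fun k => (N.choose k : ℝ) * ((-(a/b))^k * v ⟨0, by omega⟩))]
        rw [add_pow]
        rw [Finset.sum_mul]
        refine Finset.sum_congr rfl fun k hk => ?_
        simp only [one_pow]
        ring
      rw [hsum] at h
      have hne : (-(a/b)) + 1 ≠ 0 := by
        intro hc
        apply hab
        field_simp at hc
        linarith
      have := pow_ne_zero N hne
      exact by
        rcases mul_eq_zero.mp h with h' | h'
        · exact absurd h' this
        · exact h'
    funext k
    have := hgeo (k : ℕ) (by omega)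
    have hk : (⟨(k : ℕ), by omega⟩ : Fin (N+1)) = k := by ext; rfl
    rw [hk] at this
    rw [this, hv0]
    simp
  have hunit : IsUnit J := by
    rw [← Matrix.mulVec_injective_iff_isUnit]
    intro v w hvw
    have : J.mulVec (v - w) = 0 := by
      rw [Matrix.mulVec_sub, hvw, sub_self]
    have := hker _ this
    exact sub_eq_zero.mp this
  have hmul : J * J⁻¹ = 1 := Matrix.mul_nonsing_inv J ((Matrix.isUnit_iff_isUnit_det J).mp hunit)
  intro l hl j
  have h := congrFun (congrFun hmul ⟨l, by omega⟩) j
  rw [Matrix.mul_apply] at h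
  rw [key l hl (fun k => J⁻¹ k j)] at h
  have hone : (1 : Matrix (Fin (N+1)) (Fin (N+1)) ℝ) ⟨l, by omega⟩ j
      = (if (j : ℕ) = l then 1 else 0) := by
    rw [Matrix.one_apply]
    by_cases hc : (j : ℕ) = l
    · rw [if_pos hc, if_pos (by ext; simp [hc])]
    · rw [if_neg hc, if_neg (by simp [Fin.ext_iff]; omega)]
  rw [hone] at h
  rw [div_mul_eq_mul_div, one_mul, div_mul_eq_mul_div, ← sub_div, eq_div_iff hb]
  linarith
end
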